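/- arXiv:1202.2089 — 6 statements merged into one kernel-verified Lean document; each statement's English description precedes it below -/
import Mathlib

section
/- If μ₁ and μ₂ are probability measures on {1,...,L_max} with μ₁ first-order stochastically dominated by μ₂ (i.e., Σ_{j≥l} μ₁(j) ≤ Σ_{j≥l} μ₂(j) for all l), then the corresponding mean-field equilibrium sequences satisfy r_{μ₁}(k) ≥ r_{μ₂}(k) for all k ∈ ℕ, where r_μ(0)=1 and r_μ(k)=λ·u_μ(r_μ(k-1)) with u_μ(x)=Σ_l x^l μ(l) and 0<λ<1. -/
open Finset

private lemma tele_aux (x : ℝ) : ∀ L : ℕ,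
    ∑ l ∈ Icc 1 L, (x ^ l - x ^ (l + 1)) = x - x ^ (L + 1)
  | 0 => by simp
  | (L + 1) => by
    rw [Finset.sum_Icc_succ_top (by omega : 1 ≤ L + 1), tele_aux x L]
    ring

private lemma abel_id (μ : ℕ → ℝ) (x : ℝ) : ∀ L : ℕ,
    ∑ l ∈ Icc 1 L, x ^ l * μ l
      = x * (∑ j ∈ Icc 1 L, μ j)
        - ∑ l ∈ Icc 1 L, (x ^ l - x ^ (l + 1)) * (∑ j ∈ Icc (l + 1) L, μ j)
  | 0 => by simp
  | (L + 1) => by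
    rw [Finset.sum_Icc_succ_top (by omega : 1 ≤ L + 1),
        Finset.sum_Icc_succ_top (by omega : 1 ≤ L + 1),
        Finset.sum_Icc_succ_top (by omega : 1 ≤ L + 1)]
    have h1 : Icc (L + 1 + 1) (L + 1) = (∅ : Finset ℕ) := Finset.Icc_eq_empty (by omega)
    rw [h1]
    have h2 : ∀ l ∈ Icc 1 L, (x ^ l - x ^ (l + 1)) * (∑ j ∈ Icc (l + 1) (L + 1), μ j)
        = (x ^ l - x ^ (l + 1)) * (∑ j ∈ Icc (l + 1) L, μ j)
          + (x ^ l - x ^ (l + 1)) * μ (L + 1) := by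
      intro l hl
      simp only [Finset.mem_Icc] at hl
      rw [Finset.sum_Icc_succ_top (by omega : l + 1 ≤ L + 1)]
      ring
    rw [Finset.sum_congr rfl h2, Finset.sum_add_distrib, ← Finset.sum_mul, tele_aux,
        abel_id μ x L]
    simp only [Finset.sum_empty, mul_zero, add_zero]
    ring

private lemma u_le (Lmax : ℕ) (μ₁ μ₂ : ℕ → ℝ)
    (hμ₁1 : ∑ l ∈ Finset.Icc 1 Lmax, μ₁ l = 1)
    (hμ₂1 : ∑ l ∈ Finset.Icc 1 Lmax, μ₂ l = 1)
    (hdom : ∀ l ∈ Finset.Icc 1 Lmax,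
      ∑ j ∈ Finset.Icc l Lmax, μ₁ j ≤ ∑ j ∈ Finset.Icc l Lmax, μ₂ j)
    (x : ℝ) (hx0 : 0 ≤ x) (hx1 : x ≤ 1) :
    ∑ l ∈ Finset.Icc 1 Lmax, x ^ l * μ₂ l ≤ ∑ l ∈ Finset.Icc 1 Lmax, x ^ l * μ₁ l := by
  rw [abel_id, abel_id, hμ₁1, hμ₂1]
  apply sub_le_sub_left
  apply Finset.sum_le_sum
  intro l hl
  simp only [Finset.mem_Icc] at hl
  have hc : 0 ≤ x ^ l - x ^ (l + 1) :=
    sub_nonneg.mpr (pow_le_pow_of_le_one hx0 hx1 (by omega))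
  apply mul_le_mul_of_nonneg_left _ hc
  by_cases h : l + 1 ≤ Lmax
  · exact hdom (l + 1) (Finset.mem_Icc.mpr ⟨by omega, h⟩)
  · rw [Finset.Icc_eq_empty (by omega : ¬ l + 1 ≤ Lmax)]
    simp

private lemma r_bound (lam : ℝ) (hlam0 : 0 < lam) (hlam1 : lam < 1)
    (Lmax : ℕ) (μ : ℕ → ℝ) (hμ0 : ∀ l, 0 ≤ μ l)
    (hμ1 : ∑ l ∈ Finset.Icc 1 Lmax, μ l = 1)
    (r : ℕ → ℝ) (hr0 : r 0 = 1)
    (hrec : ∀ k, r (k + 1) = lam * ∑ l ∈ Finset.Icc 1 Lmax, (r k) ^ l * μ l) :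
    ∀ k, 0 ≤ r k ∧ r k ≤ 1 := by
  intro k
  induction k with
  | zero => simp [hr0]
  | succ k ih =>
    obtain ⟨h0, h1⟩ := ih
    rw [hrec]
    have hs0 : 0 ≤ ∑ l ∈ Finset.Icc 1 Lmax, (r k) ^ l * μ l :=
      Finset.sum_nonneg fun l _ => mul_nonneg (pow_nonneg h0 l) (hμ0 l)
    have hs1 : ∑ l ∈ Finset.Icc 1 Lmax, (r k) ^ l * μ l ≤ 1 := by
      calc ∑ l ∈ Finset.Icc 1 Lmax, (r k) ^ l * μ l
          ≤ ∑ l ∈ Finset.Icc 1 Lmax, μ l := by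
            apply Finset.sum_le_sum
            intro l _
            have := pow_le_one₀ h0 h1 (n := l)
            nlinarith [hμ0 l, pow_nonneg h0 l]
        _ = 1 := hμ1
    constructor
    · exact mul_nonneg hlam0.le hs0
    · nlinarith

/-- Stochastic dominance μ₁ ≤_st μ₂ implies r_{μ₁}(k) ≥ r_{μ₂}(k) for all k. -/
theorem stmt_1 (lam : ℝ) (hlam0 : 0 < lam) (hlam1 : lam < 1)
    (Lmax : ℕ) (hL : 1 ≤ Lmax)
    (μ₁ μ₂ : ℕ → ℝ)
    (hμ₁0 : ∀ l, 0 ≤ μ₁ l) (hμ₁1 : ∑ l ∈ Finset.Icc 1 Lmax, μ₁ l = 1)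
    (hμ₂0 : ∀ l, 0 ≤ μ₂ l) (hμ₂1 : ∑ l ∈ Finset.Icc 1 Lmax, μ₂ l = 1)
    (hdom : ∀ l ∈ Finset.Icc 1 Lmax,
      ∑ j ∈ Finset.Icc l Lmax, μ₁ j ≤ ∑ j ∈ Finset.Icc l Lmax, μ₂ j)
    (r₁ r₂ : ℕ → ℝ) (hr₁0 : r₁ 0 = 1) (hr₂0 : r₂ 0 = 1)
    (hrec₁ : ∀ k, r₁ (k + 1) = lam * ∑ l ∈ Finset.Icc 1 Lmax, (r₁ k) ^ l * μ₁ l)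
    (hrec₂ : ∀ k, r₂ (k + 1) = lam * ∑ l ∈ Finset.Icc 1 Lmax, (r₂ k) ^ l * μ₂ l) :
    ∀ k, r₂ k ≤ r₁ k := by
  have hb₁ := r_bound lam hlam0 hlam1 Lmax μ₁ hμ₁0 hμ₁1 r₁ hr₁0 hrec₁
  have hb₂ := r_bound lam hlam0 hlam1 Lmax μ₂ hμ₂0 hμ₂1 r₂ hr₂0 hrec₂
  intro k
  induction k with
  | zero => rw [hr₁0, hr₂0]
  | succ k ih =>
    rw [hrec₁, hrec₂]
    apply mul_le_mul_of_nonneg_left _ hlam0.le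
    calc ∑ l ∈ Finset.Icc 1 Lmax, (r₂ k) ^ l * μ₂ l
        ≤ ∑ l ∈ Finset.Icc 1 Lmax, (r₁ k) ^ l * μ₂ l := by
          apply Finset.sum_le_sum
          intro l _
          exact mul_le_mul_of_nonneg_right (pow_le_pow_left₀ (hb₂ k).1 ih l) (hμ₂0 l)
      _ ≤ ∑ l ∈ Finset.Icc 1 Lmax, (r₁ k) ^ l * μ₁ l :=
          u_le Lmax μ₁ μ₂ hμ₁1 hμ₂1 hdom (r₁ k) (hb₁ k).1 (hb₁ k).2
end

section
/- If μ₁ <_st μ₂ strictly (μ₁ ≤_st μ₂ and μ₁ ≠ μ₂) and 0 < λ < 1, then u_{μ₁}(x) > u_{μ₂}(x) for all x ∈ (0,1), and consequently r_{μ₁}(k) > r_{μ₂}(k) for all k ≥ 2, where r_μ(0)=1 and r_μ(k)=λ·u_μ(r_μ(k-1)). -/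
lemma tel_aux (x : ℝ) : ∀ M : ℕ, 1 ≤ M →
    ∑ l ∈ Finset.Icc 2 M, (x ^ l - x ^ (l - 1)) = x ^ M - x := by
  intro M hM
  induction M, hM using Nat.le_induction with
  | base => simp
  | succ M hM ih =>
    rw [Finset.sum_Icc_succ_top (by omega : 2 ≤ M + 1), ih]
    simp only [Nat.add_sub_cancel]
    ring

lemma abel_aux (x : ℝ) (μ : ℕ → ℝ) : ∀ L : ℕ,
    ∑ l ∈ Finset.Icc 1 L, x ^ l * μ l =
      x * (∑ j ∈ Finset.Icc 1 L, μ j) +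
      ∑ l ∈ Finset.Icc 2 L, (x ^ l - x ^ (l - 1)) * (∑ j ∈ Finset.Icc l L, μ j) := by
  intro L
  induction L with
  | zero => simp
  | succ L ih =>
    rcases Nat.eq_zero_or_pos L with rfl | hLpos
    · simp [Finset.Icc_self]
    rw [Finset.sum_Icc_succ_top (by omega : 1 ≤ L + 1),
        Finset.sum_Icc_succ_top (by omega : 1 ≤ L + 1), ih]
    have hcongr : ∑ l ∈ Finset.Icc 2 (L + 1), (x ^ l - x ^ (l - 1)) * (∑ j ∈ Finset.Icc l (L + 1), μ j)
        = ∑ l ∈ Finset.Icc 2 (L + 1), ((x ^ l - x ^ (l - 1)) * (∑ j ∈ Finset.Icc l L, μ j)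
            + (x ^ l - x ^ (l - 1)) * μ (L + 1)) := by
      refine Finset.sum_congr rfl ?_
      intro l hl
      rw [Finset.mem_Icc] at hl
      rw [Finset.sum_Icc_succ_top (by omega : l ≤ L + 1)]
      ring
    rw [hcongr, Finset.sum_add_distrib, ← Finset.sum_mul, tel_aux x (L + 1) (by omega),
        Finset.sum_Icc_succ_top (by omega : 2 ≤ L + 1)]
    have hempty : Finset.Icc (L + 1) L = ∅ := by
      rw [Finset.Icc_eq_empty]; omega
    rw [hempty]
    simp only [Finset.sum_empty, mul_zero, add_zero, Nat.add_sub_cancel]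
    ring

/-- Strict stochastic dominance μ₁ <_st μ₂ implies u_{μ₁}(x) > u_{μ₂}(x) on (0,1),
and consequently r_{μ₁}(k) > r_{μ₂}(k) for k ≥ 2. -/
theorem stmt_3 (lam : ℝ) (hlam0 : 0 < lam) (hlam1 : lam < 1)
    (Lmax : ℕ) (hL : 1 ≤ Lmax)
    (μ₁ μ₂ : ℕ → ℝ)
    (hμ₁0 : ∀ l, 0 ≤ μ₁ l) (hμ₁1 : ∑ l ∈ Finset.Icc 1 Lmax, μ₁ l = 1)
    (hμ₂0 : ∀ l, 0 ≤ μ₂ l) (hμ₂1 : ∑ l ∈ Finset.Icc 1 Lmax, μ₂ l = 1)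
    (hdom : ∀ l ∈ Finset.Icc 1 Lmax,
      ∑ j ∈ Finset.Icc l Lmax, μ₁ j ≤ ∑ j ∈ Finset.Icc l Lmax, μ₂ j)
    (hstrict : ∃ l ∈ Finset.Icc 1 Lmax,
      ∑ j ∈ Finset.Icc l Lmax, μ₁ j < ∑ j ∈ Finset.Icc l Lmax, μ₂ j)
    (r₁ r₂ : ℕ → ℝ) (hr₁0 : r₁ 0 = 1) (hr₂0 : r₂ 0 = 1)
    (hrec₁ : ∀ k, r₁ (k + 1) = lam * ∑ l ∈ Finset.Icc 1 Lmax, (r₁ k) ^ l * μ₁ l)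
    (hrec₂ : ∀ k, r₂ (k + 1) = lam * ∑ l ∈ Finset.Icc 1 Lmax, (r₂ k) ^ l * μ₂ l)
    (hr₁ : ∀ k, 1 ≤ k → 0 < r₁ k ∧ r₁ k < 1)
    (hr₂ : ∀ k, 1 ≤ k → 0 < r₂ k ∧ r₂ k < 1) :
    (∀ x : ℝ, 0 < x → x < 1 →
      ∑ l ∈ Finset.Icc 1 Lmax, x ^ l * μ₂ l < ∑ l ∈ Finset.Icc 1 Lmax, x ^ l * μ₁ l) ∧
    (∀ k, 2 ≤ k → r₂ k < r₁ k) := by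
  have key : ∀ x : ℝ, 0 < x → x < 1 →
      ∑ l ∈ Finset.Icc 1 Lmax, x ^ l * μ₂ l < ∑ l ∈ Finset.Icc 1 Lmax, x ^ l * μ₁ l := by
    intro x hx0 hx1
    rw [abel_aux x μ₁ Lmax, abel_aux x μ₂ Lmax, hμ₁1, hμ₂1]
    have hsum : ∑ l ∈ Finset.Icc 2 Lmax, (x ^ l - x ^ (l - 1)) * (∑ j ∈ Finset.Icc l Lmax, μ₂ j)
        < ∑ l ∈ Finset.Icc 2 Lmax, (x ^ l - x ^ (l - 1)) * (∑ j ∈ Finset.Icc l Lmax, μ₁ j) := by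
      rw [← sub_pos, ← Finset.sum_sub_distrib]
      have hfac : ∀ l ∈ Finset.Icc 2 Lmax, x ^ l - x ^ (l - 1) < 0 := by
        intro l hl
        rw [Finset.mem_Icc] at hl
        have : x ^ l < x ^ (l - 1) :=
          pow_lt_pow_right_of_lt_one₀ hx0 hx1 (by omega)
        linarith
      apply Finset.sum_pos'
      · intro l hl
        have h1 := hdom l (Finset.mem_Icc.mpr ⟨by
          rw [Finset.mem_Icc] at hl; omega, (Finset.mem_Icc.mp hl).2⟩)
        have h2 := hfac l hl
        nlinarith
      · obtain ⟨l, hl, hlt⟩ := hstrict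
        rw [Finset.mem_Icc] at hl
        have hl2 : 2 ≤ l := by
          by_contra h
          have : l = 1 := by omega
          subst this
          rw [hμ₁1, hμ₂1] at hlt
          exact lt_irrefl _ hlt
        have hlm : l ∈ Finset.Icc 2 Lmax := Finset.mem_Icc.mpr ⟨hl2, hl.2⟩
        refine ⟨l, hlm, ?_⟩
        have h2 := hfac l hlm
        nlinarith
    linarith
  refine ⟨key, ?_⟩
  have hmono : ∀ a b : ℝ, 0 ≤ a → a ≤ b →
      ∑ l ∈ Finset.Icc 1 Lmax, a ^ l * μ₁ l ≤ ∑ l ∈ Finset.Icc 1 Lmax, b ^ l * μ₁ l := by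
    intro a b ha hab
    apply Finset.sum_le_sum
    intro l hl
    exact mul_le_mul_of_nonneg_right (pow_le_pow_left₀ ha hab l) (hμ₁0 l)
  have hr11 : r₁ 1 = lam := by
    rw [hrec₁ 0, hr₁0]
    simp only [one_pow, one_mul]
    rw [hμ₁1, mul_one]
  have hr21 : r₂ 1 = lam := by
    rw [hrec₂ 0, hr₂0]
    simp only [one_pow, one_mul]
    rw [hμ₂1, mul_one]
  intro k hk
  induction k, hk using Nat.le_induction with
  | base =>
    show r₂ (1 + 1) < r₁ (1 + 1)
    rw [hrec₁ 1, hrec₂ 1, hr11, hr21]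
    exact mul_lt_mul_of_pos_left (key lam hlam0 hlam1) hlam0
  | succ k hk ih =>
    rw [hrec₁ k, hrec₂ k]
    have h2 := hr₂ k (by omega)
    have hlt := key (r₂ k) h2.1 h2.2
    have hle := hmono (r₂ k) (r₁ k) (le_of_lt h2.1) (le_of_lt ih)
    have : ∑ l ∈ Finset.Icc 1 Lmax, (r₂ k) ^ l * μ₂ l
        < ∑ l ∈ Finset.Icc 1 Lmax, (r₁ k) ^ l * μ₁ l := lt_of_lt_of_le hlt hle
    exact mul_lt_mul_of_pos_left this hlam0
end

section
/- Define the marginal value of sampling V(L, μ) = Σ_{k=0}^∞ (r_μ(k)^L − r_μ(k)^{L+1}) for integer L, where r_μ is the mean field equilibrium sequence for strategy μ and 0<λ<1. If λ² ≤ 1/2 and μ <_st μ̃ strictly, then V(L, μ) > V(L, μ̃) for every integer L with 1 ≤ L ≤ L_max − 1. -/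
lemma tel7 (x : ℝ) : ∀ M : ℕ,
    ∑ l ∈ Finset.Icc 2 (M+1), (x^(l-1) - x^l) = x - x^(M+1) := by
  intro M
  induction M with
  | zero => simp
  | succ M ih =>
      rw [Finset.sum_Icc_succ_top (by omega : 2 ≤ M+1+1), ih]
      simp [pow_succ]

lemma abel7 (x : ℝ) (μ : ℕ → ℝ) : ∀ M : ℕ,
    ∑ l ∈ Finset.Icc 1 M, x^l * μ l
      = x * (∑ j ∈ Finset.Icc 1 M, μ j)
        - ∑ l ∈ Finset.Icc 2 M, (x^(l-1) - x^l) * (∑ j ∈ Finset.Icc l M, μ j) := by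
  intro M
  induction M with
  | zero => simp
  | succ M ih =>
    rcases Nat.eq_zero_or_pos M with rfl | hM
    · simp
    · rw [Finset.sum_Icc_succ_top (by omega : 1 ≤ M+1), ih,
        Finset.sum_Icc_succ_top (by omega : 1 ≤ M+1)]
      have h1 : ∑ l ∈ Finset.Icc 2 (M+1), (x^(l-1) - x^l) * (∑ j ∈ Finset.Icc l (M+1), μ j)
          = ∑ l ∈ Finset.Icc 2 (M+1), ((x^(l-1) - x^l) * (∑ j ∈ Finset.Icc l M, μ j)
              + (x^(l-1) - x^l) * μ (M+1)) := by
        apply Finset.sum_congr rfl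
        intro l hl
        simp only [Finset.mem_Icc] at hl
        rw [Finset.sum_Icc_succ_top (by omega : l ≤ M+1), mul_add]
      rw [h1, Finset.sum_add_distrib, ← Finset.sum_mul, tel7,
        Finset.sum_Icc_succ_top (by omega : 2 ≤ M+1)]
      have h2 : (∑ j ∈ Finset.Icc (M+1) M, μ j) = 0 := by
        rw [Finset.Icc_eq_empty (by omega)]; simp
      rw [h2]
      ring

lemma dom_le7 (Lmax : ℕ) (μ μt : ℕ → ℝ)
    (hμ1 : ∑ l ∈ Finset.Icc 1 Lmax, μ l = 1)
    (hμt1 : ∑ l ∈ Finset.Icc 1 Lmax, μt l = 1)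
    (hdom : ∀ l ∈ Finset.Icc 1 Lmax,
      ∑ j ∈ Finset.Icc l Lmax, μ j ≤ ∑ j ∈ Finset.Icc l Lmax, μt j)
    {x : ℝ} (hx0 : 0 ≤ x) (hx1 : x ≤ 1) :
    ∑ l ∈ Finset.Icc 1 Lmax, x^l * μt l ≤ ∑ l ∈ Finset.Icc 1 Lmax, x^l * μ l := by
  rw [abel7 x μ Lmax, abel7 x μt Lmax, hμ1, hμt1]
  have key : ∑ l ∈ Finset.Icc 2 Lmax, (x^(l-1) - x^l) * (∑ j ∈ Finset.Icc l Lmax, μ j)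
      ≤ ∑ l ∈ Finset.Icc 2 Lmax, (x^(l-1) - x^l) * (∑ j ∈ Finset.Icc l Lmax, μt j) := by
    apply Finset.sum_le_sum
    intro l hl
    simp only [Finset.mem_Icc] at hl
    have hnn : 0 ≤ x^(l-1) - x^l := by
      have := pow_le_pow_of_le_one hx0 hx1 (Nat.sub_le l 1)
      linarith
    exact mul_le_mul_of_nonneg_left (hdom l (Finset.mem_Icc.mpr ⟨by omega, hl.2⟩)) hnn
  linarith

lemma dom_lt7 (Lmax : ℕ) (μ μt : ℕ → ℝ)
    (hμ1 : ∑ l ∈ Finset.Icc 1 Lmax, μ l = 1)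
    (hμt1 : ∑ l ∈ Finset.Icc 1 Lmax, μt l = 1)
    (hdom : ∀ l ∈ Finset.Icc 1 Lmax,
      ∑ j ∈ Finset.Icc l Lmax, μ j ≤ ∑ j ∈ Finset.Icc l Lmax, μt j)
    (hstrict : ∃ l ∈ Finset.Icc 1 Lmax,
      ∑ j ∈ Finset.Icc l Lmax, μ j < ∑ j ∈ Finset.Icc l Lmax, μt j)
    {x : ℝ} (hx0 : 0 < x) (hx1 : x < 1) :
    ∑ l ∈ Finset.Icc 1 Lmax, x^l * μt l < ∑ l ∈ Finset.Icc 1 Lmax, x^l * μ l := by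
  rw [abel7 x μ Lmax, abel7 x μt Lmax, hμ1, hμt1]
  obtain ⟨l0, hl0mem, hl0⟩ := hstrict
  simp only [Finset.mem_Icc] at hl0mem
  have hl02 : 2 ≤ l0 := by
    by_contra h
    have : l0 = 1 := by omega
    subst this
    rw [hμ1, hμt1] at hl0
    exact lt_irrefl _ hl0
  have key : ∑ l ∈ Finset.Icc 2 Lmax, (x^(l-1) - x^l) * (∑ j ∈ Finset.Icc l Lmax, μ j)
      < ∑ l ∈ Finset.Icc 2 Lmax, (x^(l-1) - x^l) * (∑ j ∈ Finset.Icc l Lmax, μt j) := by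
    apply Finset.sum_lt_sum
    · intro l hl
      simp only [Finset.mem_Icc] at hl
      have hnn : 0 ≤ x^(l-1) - x^l := by
        have := pow_le_pow_of_le_one hx0.le hx1.le (Nat.sub_le l 1)
        linarith
      exact mul_le_mul_of_nonneg_left (hdom l (Finset.mem_Icc.mpr ⟨by omega, hl.2⟩)) hnn
    · refine ⟨l0, Finset.mem_Icc.mpr ⟨hl02, hl0mem.2⟩, ?_⟩
      have hpos : 0 < x^(l0-1) - x^l0 := by
        have h : x^l0 = x^(l0-1) * x := by
          rw [← pow_succ]
          congr 1
          omega
        have hp : 0 < x^(l0-1) := pow_pos hx0 _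
        rw [h]
        nlinarith
      exact (mul_lt_mul_iff_right₀ hpos).mpr hl0
  linarith

lemma sum_pow_lt7 (Lmax : ℕ) (μ : ℕ → ℝ) (hμ0 : ∀ l, 0 ≤ μ l)
    (hμ1 : ∑ l ∈ Finset.Icc 1 Lmax, μ l = 1)
    {a b : ℝ} (ha : 0 ≤ a) (hab : a < b) :
    ∑ l ∈ Finset.Icc 1 Lmax, a^l * μ l < ∑ l ∈ Finset.Icc 1 Lmax, b^l * μ l := by
  have hex : ∃ l ∈ Finset.Icc 1 Lmax, μ l ≠ 0 := by
    by_contra h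
    push_neg at h
    rw [Finset.sum_eq_zero h] at hμ1
    norm_num at hμ1
  obtain ⟨l0, hl0mem, hl0⟩ := hex
  apply Finset.sum_lt_sum
  · intro l _
    exact mul_le_mul_of_nonneg_right (pow_le_pow_left₀ ha hab.le l) (hμ0 l)
  · refine ⟨l0, hl0mem, ?_⟩
    have hl01 : l0 ≠ 0 := by
      simp only [Finset.mem_Icc] at hl0mem; omega
    have : a ^ l0 < b ^ l0 := pow_lt_pow_left₀ hab ha hl01
    exact mul_lt_mul_of_pos_right this (lt_of_le_of_ne (hμ0 l0) (Ne.symm hl0))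

lemma fmono7 (L : ℕ) (hL : 1 ≤ L) {a b : ℝ} (ha : 0 ≤ a) (hab : a < b) (hb : b ≤ 1/2) :
    a^L - a^(L+1) < b^L - b^(L+1) := by
  have smono : StrictMonoOn (fun x : ℝ => x^L - x^(L+1)) (Set.Icc 0 (1/2)) := by
    apply strictMonoOn_of_deriv_pos (convex_Icc 0 (1/2))
    · fun_prop
    · intro x hx
      rw [interior_Icc] at hx
      have hder : HasDerivAt (fun x : ℝ => x^L - x^(L+1))
          ((L:ℝ)*x^(L-1) - ((L+1:ℕ):ℝ)*x^(L+1-1)) x :=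
        (hasDerivAt_pow L x).sub (hasDerivAt_pow (L+1) x)
      rw [hder.deriv]
      have hxL : x^(L+1-1) = x^(L-1) * x := by
        rw [← pow_succ]
        congr 1
        omega
      rw [hxL]
      have hp : 0 < x^(L-1) := pow_pos hx.1 _
      have hL' : (1:ℝ) ≤ L := by exact_mod_cast hL
      push_cast
      nlinarith [hp, hL', mul_lt_mul_of_pos_left hx.2 hp, mul_pos hp hx.1]
  exact smono ⟨ha, hab.le.trans hb⟩ ⟨ha.trans hab.le, hb⟩ hab

/-- If λ² ≤ 1/2 and μ <_st μ̃ strictly, then the marginal value of sampling satisfies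
V(L, μ) > V(L, μ̃) for every integer 1 ≤ L ≤ L_max − 1, where
V(L, μ) = Σ_k (r_μ(k)^L − r_μ(k)^{L+1}). -/
theorem stmt_7 (lam : ℝ) (hlam0 : 0 < lam) (hlam1 : lam < 1) (hlam2 : lam ^ 2 ≤ 1 / 2)
    (Lmax : ℕ) (hL : 1 ≤ Lmax)
    (μ μt : ℕ → ℝ)
    (hμ0 : ∀ l, 0 ≤ μ l) (hμ1 : ∑ l ∈ Finset.Icc 1 Lmax, μ l = 1)
    (hμt0 : ∀ l, 0 ≤ μt l) (hμt1 : ∑ l ∈ Finset.Icc 1 Lmax, μt l = 1)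
    (hdom : ∀ l ∈ Finset.Icc 1 Lmax,
      ∑ j ∈ Finset.Icc l Lmax, μ j ≤ ∑ j ∈ Finset.Icc l Lmax, μt j)
    (hstrict : ∃ l ∈ Finset.Icc 1 Lmax,
      ∑ j ∈ Finset.Icc l Lmax, μ j < ∑ j ∈ Finset.Icc l Lmax, μt j)
    (r rt : ℕ → ℝ) (hr0 : r 0 = 1) (hrt0 : rt 0 = 1)
    (hrec : ∀ k, r (k + 1) = lam * ∑ l ∈ Finset.Icc 1 Lmax, (r k) ^ l * μ l)
    (hrect : ∀ k, rt (k + 1) = lam * ∑ l ∈ Finset.Icc 1 Lmax, (rt k) ^ l * μt l) :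
    ∀ L : ℕ, 1 ≤ L → L ≤ Lmax - 1 →
      (∑' k : ℕ, ((rt k) ^ L - (rt k) ^ (L + 1))) <
        ∑' k : ℕ, ((r k) ^ L - (r k) ^ (L + 1)) := by
  -- nonnegativity
  have hr_nonneg : ∀ k, 0 ≤ r k := by
    intro k
    induction k with
    | zero => rw [hr0]; norm_num
    | succ k ih =>
      rw [hrec]
      exact mul_nonneg hlam0.le (Finset.sum_nonneg fun l _ =>
        mul_nonneg (pow_nonneg ih l) (hμ0 l))
  have hrt_nonneg : ∀ k, 0 ≤ rt k := by
    intro k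
    induction k with
    | zero => rw [hrt0]; norm_num
    | succ k ih =>
      rw [hrect]
      exact mul_nonneg hlam0.le (Finset.sum_nonneg fun l _ =>
        mul_nonneg (pow_nonneg ih l) (hμt0 l))
  -- geometric bound
  have hpowle1 : ∀ k : ℕ, lam ^ k ≤ 1 := fun k => pow_le_one₀ hlam0.le hlam1.le
  have hbound : ∀ (s : ℕ → ℝ) (ν : ℕ → ℝ), (∀ l, 0 ≤ ν l) →
      (∑ l ∈ Finset.Icc 1 Lmax, ν l = 1) → s 0 = 1 → (∀ k, 0 ≤ s k) →
      (∀ k, s (k + 1) = lam * ∑ l ∈ Finset.Icc 1 Lmax, (s k) ^ l * ν l) →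
      ∀ k, s k ≤ lam ^ k := by
    intro s ν hν0 hν1 hs0 hsnn hsrec k
    induction k with
    | zero => rw [hs0]; norm_num
    | succ k ih =>
      have hle1 : s k ≤ 1 := ih.trans (hpowle1 k)
      have hS : ∑ l ∈ Finset.Icc 1 Lmax, s k ^ l * ν l ≤ s k := by
        calc ∑ l ∈ Finset.Icc 1 Lmax, s k ^ l * ν l
            ≤ ∑ l ∈ Finset.Icc 1 Lmax, s k * ν l := by
              apply Finset.sum_le_sum
              intro l hl
              simp only [Finset.mem_Icc] at hl
              have : s k ^ l ≤ s k ^ 1 :=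
                pow_le_pow_of_le_one (hsnn k) hle1 hl.1
              rw [pow_one] at this
              exact mul_le_mul_of_nonneg_right this (hν0 l)
          _ = s k := by rw [← Finset.mul_sum, hν1, mul_one]
      calc s (k+1) = lam * ∑ l ∈ Finset.Icc 1 Lmax, s k ^ l * ν l := hsrec k
        _ ≤ lam * s k := mul_le_mul_of_nonneg_left hS hlam0.le
        _ ≤ lam * lam ^ k := mul_le_mul_of_nonneg_left ih hlam0.le
        _ = lam ^ (k+1) := by ring
  have hr_le : ∀ k, r k ≤ lam ^ k := hbound r μ hμ0 hμ1 hr0 hr_nonneg hrec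
  have hrt_le : ∀ k, rt k ≤ lam ^ k := hbound rt μt hμt0 hμt1 hrt0 hrt_nonneg hrect
  have hr_le1 : ∀ k, r k ≤ 1 := fun k => (hr_le k).trans (hpowle1 k)
  have hrt_le1 : ∀ k, rt k ≤ 1 := fun k => (hrt_le k).trans (hpowle1 k)
  -- r 1 = rt 1 = lam
  have hr1 : r 1 = lam := by
    rw [hrec 0, hr0]
    simp only [one_pow, one_mul]
    rw [hμ1, mul_one]
  have hrt1 : rt 1 = lam := by
    rw [hrect 0, hrt0]
    simp only [one_pow, one_mul]
    rw [hμt1, mul_one]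
  -- strict inequality for k ≥ 2
  have hlt : ∀ k, 2 ≤ k → rt k < r k := by
    intro k hk
    induction k, hk using Nat.le_induction with
    | base =>
      rw [hrec 1, hrect 1, hr1, hrt1]
      exact mul_lt_mul_of_pos_left
        (dom_lt7 Lmax μ μt hμ1 hμt1 hdom hstrict hlam0 hlam1) hlam0
    | succ k hk ih =>
      calc rt (k+1) = lam * ∑ l ∈ Finset.Icc 1 Lmax, rt k ^ l * μt l := hrect k
        _ ≤ lam * ∑ l ∈ Finset.Icc 1 Lmax, rt k ^ l * μ l :=
            mul_le_mul_of_nonneg_left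
              (dom_le7 Lmax μ μt hμ1 hμt1 hdom (hrt_nonneg k) (hrt_le1 k)) hlam0.le
        _ < lam * ∑ l ∈ Finset.Icc 1 Lmax, r k ^ l * μ l :=
            mul_lt_mul_of_pos_left (sum_pow_lt7 Lmax μ hμ0 hμ1 (hrt_nonneg k) ih) hlam0
        _ = r (k+1) := (hrec k).symm
  -- bound r k ≤ 1/2 for k ≥ 2
  have hhalf : ∀ k, 2 ≤ k → r k ≤ 1/2 := by
    intro k hk
    calc r k ≤ lam ^ k := hr_le k
      _ ≤ lam ^ 2 := pow_le_pow_of_le_one hlam0.le hlam1.le hk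
      _ ≤ 1/2 := hlam2
  intro L hL1 _
  -- pointwise inequalities
  have hfg : ∀ k, rt k ^ L - rt k ^ (L+1) ≤ r k ^ L - r k ^ (L+1) := by
    intro k
    match k with
    | 0 => rw [hr0, hrt0]
    | 1 => rw [hr1, hrt1]
    | (k+2) =>
      exact (fmono7 L hL1 (hrt_nonneg (k+2)) (hlt (k+2) (by omega))
        (hhalf (k+2) (by omega))).le
  have hfg2 : rt 2 ^ L - rt 2 ^ (L+1) < r 2 ^ L - r 2 ^ (L+1) :=
    fmono7 L hL1 (hrt_nonneg 2) (hlt 2 le_rfl) (hhalf 2 le_rfl)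
  -- summability
  have hterm : ∀ (s : ℕ → ℝ), (∀ k, 0 ≤ s k) → (∀ k, s k ≤ lam ^ k) →
      Summable (fun k => s k ^ L - s k ^ (L+1)) := by
    intro s hs0 hsle
    have hs1 : ∀ k, s k ≤ 1 := fun k => (hsle k).trans (hpowle1 k)
    refine Summable.of_nonneg_of_le ?_ ?_ (summable_geometric_of_lt_one hlam0.le hlam1)
    · intro k
      have := pow_le_pow_of_le_one (hs0 k) (hs1 k) (by omega : L ≤ L + 1)
      linarith
    · intro k
      have h1 : s k ^ L ≤ s k ^ 1 := pow_le_pow_of_le_one (hs0 k) (hs1 k) hL1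
      rw [pow_one] at h1
      have h2 : 0 ≤ s k ^ (L+1) := pow_nonneg (hs0 k) _
      have := hsle k
      linarith
  exact Summable.tsum_lt_tsum hfg hfg2 (hterm rt hrt_nonneg hrt_le) (hterm r hr_nonneg hr_le)
end

section
/- If μ₁ <_st μ₂ (strict first-order stochastic dominance) for probability measures on {1,...,L_max} and 0<λ<1, then for every L ∈ {1,...,L_max}, the mean-field expected waiting times satisfy E[W(L, μ₁)] > E[W(L, μ₂)], where E[W(L,μ)] = Σ_{k=0}^∞ r_μ(k)^L. -/
open Finset

private lemma telescope_pow (r : ℝ) (l N : ℕ) (hl : l ≤ N) :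
    ∑ m ∈ Icc l N, (r ^ m - r ^ (m + 1)) = r ^ l - r ^ (N + 1) := by
  induction N with
  | zero => interval_cases l; simp
  | succ n ih =>
    rcases Nat.lt_or_ge n l with h | h
    · have : l = n + 1 := le_antisymm hl h
      subst this; simp
    · rw [Finset.sum_Icc_succ_top (by omega), ih h]; ring

private lemma sum_swap_Icc (N : ℕ) (f : ℕ → ℕ → ℝ) :
    ∑ l ∈ Icc 1 N, ∑ m ∈ Icc l N, f l m
      = ∑ m ∈ Icc 1 N, ∑ l ∈ Icc 1 m, f l m := by
  have h := Finset.sum_Ico_Ico_comm 1 (N + 1) f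
  simpa [Finset.Ico_add_one_right_eq_Icc] using h

/-- Abel-summation type identity: the sum of `r^l * μ l` in terms of partial sums of `μ`. -/
private lemma sum_pow_mul_eq (N : ℕ) (r : ℝ) (μ : ℕ → ℝ) :
    ∑ l ∈ Icc 1 N, r ^ l * μ l
      = r ^ (N + 1) * (∑ l ∈ Icc 1 N, μ l)
        + ∑ m ∈ Icc 1 N, (r ^ m - r ^ (m + 1)) * (∑ l ∈ Icc 1 m, μ l) := by
  have h1 : ∀ l ∈ Icc 1 N, r ^ l * μ l
      = r ^ (N + 1) * μ l + ∑ m ∈ Icc l N, (r ^ m - r ^ (m + 1)) * μ l := by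
    intro l hl
    simp only [mem_Icc] at hl
    rw [← Finset.sum_mul, telescope_pow r l N hl.2]
    ring
  rw [Finset.sum_congr rfl h1, Finset.sum_add_distrib, ← Finset.mul_sum,
    sum_swap_Icc N (fun l m => (r ^ m - r ^ (m + 1)) * μ l)]
  congr 1
  exact Finset.sum_congr rfl fun m _ => (Finset.mul_sum _ _ _).symm

/-- Positive externality in the mean field model: strict stochastic dominance
μ₁ <_st μ₂ implies E[W(L,μ₁)] > E[W(L,μ₂)] for every L ∈ {1,...,L_max}, where
E[W(L,μ)] = Σ_k r_μ(k)^L. -/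
theorem stmt_9 (lam : ℝ) (hlam0 : 0 < lam) (hlam1 : lam < 1)
    (Lmax : ℕ) (hL : 1 ≤ Lmax)
    (μ₁ μ₂ : ℕ → ℝ)
    (hμ₁0 : ∀ l, 0 ≤ μ₁ l) (hμ₁1 : ∑ l ∈ Finset.Icc 1 Lmax, μ₁ l = 1)
    (hμ₂0 : ∀ l, 0 ≤ μ₂ l) (hμ₂1 : ∑ l ∈ Finset.Icc 1 Lmax, μ₂ l = 1)
    (hdom : ∀ l ∈ Finset.Icc 1 Lmax,
      ∑ j ∈ Finset.Icc l Lmax, μ₁ j ≤ ∑ j ∈ Finset.Icc l Lmax, μ₂ j)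
    (hstrict : ∃ l ∈ Finset.Icc 1 Lmax,
      ∑ j ∈ Finset.Icc l Lmax, μ₁ j < ∑ j ∈ Finset.Icc l Lmax, μ₂ j)
    (r₁ r₂ : ℕ → ℝ) (hr₁0 : r₁ 0 = 1) (hr₂0 : r₂ 0 = 1)
    (hrec₁ : ∀ k, r₁ (k + 1) = lam * ∑ l ∈ Finset.Icc 1 Lmax, (r₁ k) ^ l * μ₁ l)
    (hrec₂ : ∀ k, r₂ (k + 1) = lam * ∑ l ∈ Finset.Icc 1 Lmax, (r₂ k) ^ l * μ₂ l) :
    ∀ L ∈ Finset.Icc 1 Lmax,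
      (∑' k : ℕ, (r₂ k) ^ L) < ∑' k : ℕ, (r₁ k) ^ L := by
  -- positivity witnesses for the two measures
  have hwit : ∀ (μ : ℕ → ℝ), (∀ l, 0 ≤ μ l) → (∑ l ∈ Icc 1 Lmax, μ l = 1) →
      ∃ a ∈ Icc 1 Lmax, 0 < μ a := by
    intro μ h0 h1
    by_contra h
    push_neg at h
    have : ∑ l ∈ Icc 1 Lmax, μ l = 0 :=
      Finset.sum_eq_zero fun l hl => le_antisymm (h l hl) (h0 l)
    rw [h1] at this; norm_num at this
  obtain ⟨a, ha, hμa⟩ := hwit μ₁ hμ₁0 hμ₁1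
  obtain ⟨b, hb, hμb⟩ := hwit μ₂ hμ₂0 hμ₂1
  -- complement relation between head and tail sums
  have hsplit : ∀ (μ : ℕ → ℝ), (∑ l ∈ Icc 1 Lmax, μ l = 1) → ∀ m ≤ Lmax,
      ∑ l ∈ Icc 1 m, μ l = 1 - ∑ j ∈ Icc (m + 1) Lmax, μ j := by
    intro μ h1 m hm
    have : (∑ l ∈ Icc 1 m, μ l) + ∑ j ∈ Icc (m + 1) Lmax, μ j = 1 := by
      rw [← h1]
      rw [show Icc 1 m = Ioc 0 m by rw [← Finset.Icc_add_one_left_eq_Ioc, zero_add],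
        show Icc (m+1) Lmax = Ioc m Lmax by rw [← Finset.Icc_add_one_left_eq_Ioc],
        show Icc 1 Lmax = Ioc 0 Lmax by rw [← Finset.Icc_add_one_left_eq_Ioc, zero_add]]
      exact Finset.sum_Ioc_consecutive _ (Nat.zero_le m) hm
    linarith
  -- generic facts about g(r) = ∑ r^l μ l
  -- (1) positivity
  have hgpos : ∀ (μ : ℕ → ℝ) (c : ℕ), (∀ l, 0 ≤ μ l) → c ∈ Icc 1 Lmax → 0 < μ c →
      ∀ r : ℝ, 0 < r → 0 < ∑ l ∈ Icc 1 Lmax, r ^ l * μ l := by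
    intro μ c h0 hc hμc r hr
    have : 0 < r ^ c * μ c := mul_pos (pow_pos hr c) hμc
    refine lt_of_lt_of_le this ?_
    exact Finset.single_le_sum (f := fun l => r ^ l * μ l)
      (fun l _ => mul_nonneg (le_of_lt (pow_pos hr l)) (h0 l)) hc
  -- (2) g(r) ≤ r for 0 ≤ r ≤ 1
  have hgle : ∀ (μ : ℕ → ℝ), (∀ l, 0 ≤ μ l) → (∑ l ∈ Icc 1 Lmax, μ l = 1) →
      ∀ r : ℝ, 0 ≤ r → r ≤ 1 → ∑ l ∈ Icc 1 Lmax, r ^ l * μ l ≤ r := by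
    intro μ h0 h1 r hr0 hr1
    calc ∑ l ∈ Icc 1 Lmax, r ^ l * μ l ≤ ∑ l ∈ Icc 1 Lmax, r * μ l := by
          refine Finset.sum_le_sum fun l hl => ?_
          simp only [mem_Icc] at hl
          have : r ^ l ≤ r ^ 1 := pow_le_pow_of_le_one hr0 hr1 hl.1
          simpa using mul_le_mul_of_nonneg_right this (h0 l)
      _ = r := by rw [← Finset.mul_sum, h1, mul_one]
  -- (3) strict monotonicity of g₁ in r
  have hgmono : ∀ s t : ℝ, 0 ≤ s → s < t →
      ∑ l ∈ Icc 1 Lmax, s ^ l * μ₁ l < ∑ l ∈ Icc 1 Lmax, t ^ l * μ₁ l := by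
    intro s t hs hst
    refine Finset.sum_lt_sum (fun l hl => ?_) ⟨a, ha, ?_⟩
    · exact mul_le_mul_of_nonneg_right (pow_le_pow_left₀ hs hst.le l) (hμ₁0 l)
    · simp only [mem_Icc] at ha
      exact mul_lt_mul_of_pos_right (pow_lt_pow_left₀ hst hs (by omega)) hμa
  -- (4) strict dominance : g₂(r) < g₁(r) for 0 < r < 1
  have hgdom : ∀ r : ℝ, 0 < r → r < 1 →
      ∑ l ∈ Icc 1 Lmax, r ^ l * μ₂ l < ∑ l ∈ Icc 1 Lmax, r ^ l * μ₁ l := by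
    intro r hr0 hr1
    rw [sum_pow_mul_eq, sum_pow_mul_eq, hμ₁1, hμ₂1]
    refine add_lt_add_right ?_ _
    obtain ⟨w, hw, hwlt⟩ := hstrict
    simp only [mem_Icc] at hw
    have hw2 : 2 ≤ w := by
      by_contra h
      have : w = 1 := by omega
      subst this
      rw [hμ₁1, hμ₂1] at hwlt
      exact lt_irrefl _ hwlt
    have hcm : ∀ m : ℕ, 0 < r ^ m - r ^ (m + 1) := by
      intro m
      have := pow_pos hr0 m
      have : r ^ (m + 1) < r ^ m := by
        calc r ^ (m+1) = r ^ m * r := by ring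
          _ < r ^ m * 1 := by nlinarith [pow_pos hr0 m]
          _ = r ^ m := mul_one _
      linarith
    refine Finset.sum_lt_sum (fun m hm => ?_) ⟨w - 1, ?_, ?_⟩
    · simp only [mem_Icc] at hm
      have hd : ∑ l ∈ Icc 1 m, μ₂ l ≤ ∑ l ∈ Icc 1 m, μ₁ l := by
        rw [hsplit μ₁ hμ₁1 m hm.2, hsplit μ₂ hμ₂1 m hm.2]
        rcases Nat.lt_or_ge Lmax (m + 1) with h | h
        · rw [Finset.Icc_eq_empty (by omega), Finset.sum_empty, Finset.sum_empty]
        · have := hdom (m + 1) (by simp [mem_Icc]; omega)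
          linarith
      exact mul_le_mul_of_nonneg_left hd (hcm m).le
    · simp only [mem_Icc]; omega
    · have hww : w - 1 + 1 = w := by omega
      have hd : ∑ l ∈ Icc 1 (w-1), μ₂ l < ∑ l ∈ Icc 1 (w-1), μ₁ l := by
        rw [hsplit μ₁ hμ₁1 (w-1) (by omega), hsplit μ₂ hμ₂1 (w-1) (by omega), hww]
        linarith
      exact mul_lt_mul_of_pos_left hd (hcm (w - 1))
  -- bounds on the sequences
  have hbnd : ∀ (μ : ℕ → ℝ) (r : ℕ → ℝ) (c : ℕ), (∀ l, 0 ≤ μ l) →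
      (∑ l ∈ Icc 1 Lmax, μ l = 1) → c ∈ Icc 1 Lmax → 0 < μ c → r 0 = 1 →
      (∀ k, r (k + 1) = lam * ∑ l ∈ Icc 1 Lmax, (r k) ^ l * μ l) →
      ∀ k, 0 < r k ∧ r k ≤ lam ^ k := by
    intro μ r c h0 h1 hc hμc hr0 hrec k
    induction k with
    | zero => simp [hr0]
    | succ n ih =>
      obtain ⟨hp, hub⟩ := ih
      have hub1 : r n ≤ 1 := hub.trans (pow_le_one₀ hlam0.le hlam1.le)
      constructor
      · rw [hrec n]
        exact mul_pos hlam0 (hgpos μ c h0 hc hμc (r n) hp)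
      · rw [hrec n, pow_succ, mul_comm (lam ^ n) lam]
        refine mul_le_mul_of_nonneg_left ?_ hlam0.le
        exact (hgle μ h0 h1 (r n) hp.le hub1).trans hub
  have hb₁ := hbnd μ₁ r₁ a hμ₁0 hμ₁1 ha hμa hr₁0 hrec₁
  have hb₂ := hbnd μ₂ r₂ b hμ₂0 hμ₂1 hb hμb hr₂0 hrec₂
  have hlt1 : ∀ k, lam ^ k < 1 → r₁ k < 1 := fun k h => lt_of_le_of_lt (hb₁ k).2 h
  -- r 1 = lam for both
  have hr11 : r₁ 1 = lam := by
    rw [hrec₁ 0, hr₁0]; simp [hμ₁1]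
  have hr21 : r₂ 1 = lam := by
    rw [hrec₂ 0, hr₂0]; simp [hμ₂1]
  -- strict inequality for k ≥ 2
  have hkey : ∀ k, r₂ (k + 2) < r₁ (k + 2) := by
    intro k
    induction k with
    | zero =>
      rw [show (2:ℕ) = 1 + 1 from rfl, hrec₁ 1, hrec₂ 1, hr11, hr21]
      exact mul_lt_mul_of_pos_left (hgdom lam hlam0 hlam1) hlam0
    | succ n ih =>
      rw [show n + 1 + 2 = (n + 2) + 1 from rfl, hrec₁ (n+2), hrec₂ (n+2)]
      refine mul_lt_mul_of_pos_left ?_ hlam0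
      have h2 : 0 < r₂ (n + 2) := (hb₂ (n+2)).1
      have h2u : r₂ (n + 2) < 1 :=
        lt_of_le_of_lt (hb₂ (n+2)).2 (pow_lt_one₀ hlam0.le hlam1 (by omega))
      calc ∑ l ∈ Icc 1 Lmax, (r₂ (n+2)) ^ l * μ₂ l
          < ∑ l ∈ Icc 1 Lmax, (r₂ (n+2)) ^ l * μ₁ l := hgdom _ h2 h2u
        _ < ∑ l ∈ Icc 1 Lmax, (r₁ (n+2)) ^ l * μ₁ l := hgmono _ _ h2.le ih
  have hle : ∀ k, r₂ k ≤ r₁ k := by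
    intro k
    match k with
    | 0 => rw [hr₁0, hr₂0]
    | 1 => rw [hr11, hr21]
    | (n + 2) => exact (hkey n).le
  -- conclude
  intro L hLmem
  simp only [mem_Icc] at hLmem
  have hLpos : 1 ≤ L := hLmem.1
  have hsum : Summable (fun k : ℕ => (r₁ k) ^ L) := by
    refine Summable.of_nonneg_of_le (fun k => pow_nonneg (hb₁ k).1.le L)
      (fun k => ?_) (summable_geometric_of_lt_one (pow_nonneg hlam0.le L)
        (pow_lt_one₀ hlam0.le hlam1 (by omega)))
    calc (r₁ k) ^ L ≤ (lam ^ k) ^ L := pow_le_pow_left₀ (hb₁ k).1.le (hb₁ k).2 L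
      _ = (lam ^ L) ^ k := by rw [← pow_mul, ← pow_mul, Nat.mul_comm]
  refine Summable.tsum_lt_tsum_of_nonneg (i := 2) (fun k => pow_nonneg (hb₂ k).1.le L)
    (fun k => pow_le_pow_left₀ (hb₂ k).1.le (hle k) L) ?_ hsum
  exact pow_lt_pow_left₀ (hkey 0) (hb₂ 2).1.le (by omega)
end

section
/- In the mean field model with cost C(L,μ) = c·Σ_k r_μ(k)^L + c_s·L, no Nash equilibrium μ* can strictly stochastically dominate a social optimum μ*_soc. That is: if μ*_soc minimizes Σ_L μ(L)·C(L,μ) over probability measures μ, if μ* satisfies Σ_L μ*(L)·C(L,μ*) ≤ Σ_L μ(L)·C(L,μ*) for all μ, and if strict dominance μ*_soc <_st μ* implies C(L, μ*_soc) > C(L, μ*) for all L (positive externality), then μ*_soc <_st μ* leads to a contradiction, so ¬(μ*_soc <_st μ*). -/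
/-- No Nash equilibrium μ* can strictly stochastically dominate a social optimum μ*_soc
in the mean field model. -/
theorem stmt_10 (Lmax : ℕ) (hL : 1 ≤ Lmax)
    (C : ℕ → (ℕ → ℝ) → ℝ)
    (μsoc μstar : ℕ → ℝ)
    (hsoc0 : ∀ l, 0 ≤ μsoc l) (hsoc1 : ∑ l ∈ Finset.Icc 1 Lmax, μsoc l = 1)
    (hstar0 : ∀ l, 0 ≤ μstar l) (hstar1 : ∑ l ∈ Finset.Icc 1 Lmax, μstar l = 1)
    -- μ*_soc is a social optimum
    (hsocOpt : ∀ ν : ℕ → ℝ, (∀ l, 0 ≤ ν l) → (∑ l ∈ Finset.Icc 1 Lmax, ν l = 1) →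
      ∑ L ∈ Finset.Icc 1 Lmax, μsoc L * C L μsoc ≤ ∑ L ∈ Finset.Icc 1 Lmax, ν L * C L ν)
    -- μ* is a Nash equilibrium
    (hnash : ∀ ν : ℕ → ℝ, (∀ l, 0 ≤ ν l) → (∑ l ∈ Finset.Icc 1 Lmax, ν l = 1) →
      ∑ L ∈ Finset.Icc 1 Lmax, μstar L * C L μstar ≤
        ∑ L ∈ Finset.Icc 1 Lmax, ν L * C L μstar)
    -- positive externality under strict stochastic dominance
    (hext : ((∀ l ∈ Finset.Icc 1 Lmax,
        ∑ j ∈ Finset.Icc l Lmax, μsoc j ≤ ∑ j ∈ Finset.Icc l Lmax, μstar j) ∧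
      (∃ l ∈ Finset.Icc 1 Lmax,
        ∑ j ∈ Finset.Icc l Lmax, μsoc j < ∑ j ∈ Finset.Icc l Lmax, μstar j)) →
      ∀ L ∈ Finset.Icc 1 Lmax, C L μstar < C L μsoc) :
    ¬ ((∀ l ∈ Finset.Icc 1 Lmax,
        ∑ j ∈ Finset.Icc l Lmax, μsoc j ≤ ∑ j ∈ Finset.Icc l Lmax, μstar j) ∧
      (∃ l ∈ Finset.Icc 1 Lmax,
        ∑ j ∈ Finset.Icc l Lmax, μsoc j < ∑ j ∈ Finset.Icc l Lmax, μstar j)) := by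
  intro hdom
  have hC := hext hdom
  -- there exists l in Icc with μsoc l > 0
  have hpos : ∃ l ∈ Finset.Icc 1 Lmax, 0 < μsoc l := by
    by_contra h
    push_neg at h
    have : ∑ l ∈ Finset.Icc 1 Lmax, μsoc l = 0 := by
      apply Finset.sum_eq_zero
      intro l hl
      exact le_antisymm (h l hl) (hsoc0 l)
    simp [this] at hsoc1
  obtain ⟨l0, hl0, hl0pos⟩ := hpos
  have h1 := hsocOpt μstar hstar0 hstar1
  have h2 := hnash μsoc hsoc0 hsoc1
  have h3 : ∑ L ∈ Finset.Icc 1 Lmax, μsoc L * C L μstar <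
      ∑ L ∈ Finset.Icc 1 Lmax, μsoc L * C L μsoc := by
    apply Finset.sum_lt_sum
    · intro i hi
      exact mul_le_mul_of_nonneg_left (le_of_lt (hC i hi)) (hsoc0 i)
    · exact ⟨l0, hl0, by
        exact mul_lt_mul_of_pos_left (hC l0 hl0) hl0pos⟩
  linarith
end

section
/- Stationary solution of the mean field equation: a sequence (r(k))_{k≥0} with r(0)=1, r(k) → 0, and satisfying the balance equations λ·(u_μ(r(k−1)) − u_μ(r(k))) = r(k) − r(k+1) for all k ≥ 1 must satisfy r(k) = λ·u_μ(r(k−1)) for all k ≥ 1. -/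
/-- A stationary solution of the mean field balance equations
λ(u_μ(r(k−1)) − u_μ(r(k))) = r(k) − r(k+1) with r(0)=1, r(k)→0 and Σ r(k) < ∞
satisfies r(k) = λ·u_μ(r(k−1)) for all k ≥ 1. -/
theorem stmt_16 (lam : ℝ) (hlam0 : 0 < lam) (hlam1 : lam < 1)
    (Lmax : ℕ) (hL : 1 ≤ Lmax)
    (μ : ℕ → ℝ) (hμ0 : ∀ l, 0 ≤ μ l) (hμ1 : ∑ l ∈ Finset.Icc 1 Lmax, μ l = 1)
    (r : ℕ → ℝ) (hr0 : r 0 = 1) (hr01 : ∀ k, 0 ≤ r k ∧ r k ≤ 1)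
    (hlim : Filter.Tendsto r Filter.atTop (nhds 0))
    (hsum : Summable r)
    (hbal : ∀ k : ℕ,
      lam * ((∑ l ∈ Finset.Icc 1 Lmax, (r k) ^ l * μ l) -
        ∑ l ∈ Finset.Icc 1 Lmax, (r (k + 1)) ^ l * μ l) = r (k + 1) - r (k + 2)) :
    ∀ k : ℕ, r (k + 1) = lam * ∑ l ∈ Finset.Icc 1 Lmax, (r k) ^ l * μ l := by
  set u : ℝ → ℝ := fun x => ∑ l ∈ Finset.Icc 1 Lmax, x ^ l * μ l with hu
  set f : ℕ → ℝ := fun k => r (k + 1) - lam * u (r k) with hf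
  have hconst : ∀ k, f k = f 0 := by
    intro k
    induction k with
    | zero => rfl
    | succ n ih =>
      have hb := hbal n
      have : f (n + 1) = f n := by
        simp only [hf]
        have : lam * (u (r n) - u (r (n + 1))) = r (n + 1) - r (n + 2) := hb
        ring_nf
        ring_nf at this
        linarith
      rw [this, ih]
  -- f tends to 0
  have hucont : Continuous u := by
    apply continuous_finset_sum
    intro l _
    exact (continuous_pow l).mul continuous_const
  have hu0 : u 0 = 0 := by
    simp only [hu]
    apply Finset.sum_eq_zero
    intro l hl
    have : 1 ≤ l := (Finset.mem_Icc.mp hl).1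
    rw [zero_pow (by omega), zero_mul]
  have h1 : Filter.Tendsto (fun k => u (r k)) Filter.atTop (nhds 0) := by
    have := (hucont.tendsto 0).comp hlim
    rwa [hu0] at this
  have h2 : Filter.Tendsto (fun k => r (k + 1)) Filter.atTop (nhds 0) :=
    hlim.comp (Filter.tendsto_add_atTop_nat 1)
  have hftend : Filter.Tendsto f Filter.atTop (nhds 0) := by
    have := h2.sub (h1.const_mul lam)
    simpa using this
  have hf0 : f 0 = 0 := by
    have : Filter.Tendsto f Filter.atTop (nhds (f 0)) := by
      have : f = fun _ => f 0 := funext hconst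
      rw [this]; exact tendsto_const_nhds
    exact tendsto_nhds_unique this hftend
  intro k
  have := hconst k
  rw [hf0] at this
  simp only [hf] at this
  linarith
end
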